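/- Let n ≥ 1 be an integer and K ≥ 1 a real number. There exists a constant C = C(n, K) such that the following holds. Let R > 0, let γ : ℝ^n → [0, ∞) be measurable with M₁ := ∫_{ℝ^n} |β| γ(β) dβ < ∞ and M_{K+1} := ∫_{ℝ^n} |β|^{K+1} γ(β) dβ < ∞, and let f : ℝ^n → [0, ∞) be measurable. Then for every α ∈ ℝ^n with (f ∗ φ_R)(α) < ∞, ∫_{ℝ^n} |(f ∗ φ_R)(α) − (f ∗ φ_R)(α + β)| γ(β) dβ ≤ C R^{−1} (M₁ + R^{−K} M_{K+1}) (f ∗ φ_R)(α). -/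

import Mathlib

open MeasureTheory
open scoped ENNReal

section AuxLemmas
open Real

lemma bern {K s : ℝ} (hK : 1 ≤ K) (hs : 0 ≤ s) :
    (1 + s) ^ K ≤ 1 + 2 ^ (K + 1) * (s + s ^ (K + 1)) := by
  have h2 : (0:ℝ) < 2 ^ (K + 1) := rpow_pos_of_pos two_pos _
  rcases le_total s 1 with h1 | h1
  · have hc := (convexOn_rpow hK).2 (Set.mem_Ici.2 (zero_le_one)) (Set.mem_Ici.2 (by norm_num : (0:ℝ) ≤ 2))
      (by linarith : (0:ℝ) ≤ 1 - s) hs (by ring)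
    simp only [smul_eq_mul] at hc
    have he : (1 - s) * 1 + s * 2 = 1 + s := by ring
    rw [he, one_rpow] at hc
    have h2K : (2:ℝ) ^ K ≤ 2 ^ (K+1) := rpow_le_rpow_of_exponent_le one_le_two (by linarith)
    have hsK : 0 ≤ s ^ (K+1) := rpow_nonneg hs _
    nlinarith [mul_le_mul_of_nonneg_left h2K hs]
  · have : (1 + s) ^ K ≤ (2 * s) ^ K := rpow_le_rpow (by linarith) (by linarith) (by linarith)
    have h2s : (2 * s) ^ K = 2 ^ K * s ^ K := mul_rpow (by norm_num) hs
    have hsK : s ^ K ≤ s ^ (K + 1) := rpow_le_rpow_of_exponent_le h1 (by linarith)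
    have h2K : (2:ℝ) ^ K ≤ 2 ^ (K+1) := rpow_le_rpow_of_exponent_le one_le_two (by linarith)
    have hsK0 : 0 ≤ s ^ K := rpow_nonneg hs _
    nlinarith [rpow_nonneg hs (K+1), mul_le_mul h2K hsK hsK0 (le_of_lt h2)]

lemma key {K A B s : ℝ} (hK : 1 ≤ K) (hA : 1 ≤ A) (hB : 1 ≤ B) (hs : |A - B| ≤ s) :
    |A ^ (-K) - B ^ (-K)| ≤ K * 2 ^ (K + 1) * (s + s ^ (K + 1)) * A ^ (-K) := by
  have hA0 : (0:ℝ) < A := by linarith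
  have hB0 : (0:ℝ) < B := by linarith
  have hs0 : 0 ≤ s := le_trans (abs_nonneg _) hs
  have hAK : 0 < A ^ (-K) := rpow_pos_of_pos hA0 _
  have h2 : (0:ℝ) < 2 ^ (K + 1) := rpow_pos_of_pos two_pos _
  have h21 : (1:ℝ) ≤ 2 ^ (K + 1) := one_le_rpow one_le_two (by linarith)
  have hsum : 0 ≤ s + s ^ (K+1) := by positivity
  have hK0 : (0:ℝ) ≤ K := by linarith
  have hRHS : 0 ≤ K * 2 ^ (K+1) * (s + s^(K+1)) * A ^ (-K) :=
    mul_nonneg (mul_nonneg (mul_nonneg hK0 h2.le) hsum) hAK.le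
  rw [abs_sub_le_iff]
  constructor
  · rcases le_total B A with h | h
    · have : A ^ (-K) ≤ B ^ (-K) := rpow_le_rpow_of_nonpos hB0 h (by linarith)
      linarith
    · set t := A / B with ht
      have ht1 : t ≤ 1 := by rw [ht, div_le_one hB0]; exact h
      have ht0 : 0 < t := div_pos hA0 hB0
      have hBt : B ^ (-K) = A ^ (-K) * t ^ K := by
        rw [ht, div_rpow hA0.le hB0.le, rpow_neg hA0.le, rpow_neg hB0.le]
        field_simp
      have hbern : 1 + K * (t - 1) ≤ t ^ K := by
        have := one_add_mul_self_le_rpow_one_add (by linarith : (-1:ℝ) ≤ t - 1) hK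
        simpa using this
      have h1t : 1 - t ≤ s := by
        have hBA : B - A ≤ s := by rw [abs_sub_le_iff] at hs; linarith [hs.2]
        rw [ht]
        rw [sub_div' hB0.ne', div_le_iff₀ hB0]
        nlinarith
      have hKs : K * s ≤ K * 2 ^ (K+1) * (s + s^(K+1)) := by
        have hx : s ≤ 2 ^ (K+1) * (s + s^(K+1)) := by nlinarith [rpow_nonneg hs0 (K+1)]
        calc K * s ≤ K * (2 ^ (K+1) * (s + s^(K+1))) := mul_le_mul_of_nonneg_left hx hK0
          _ = K * 2 ^ (K+1) * (s + s^(K+1)) := by ring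
      calc A ^ (-K) - B ^ (-K) = A ^ (-K) * (1 - t ^ K) := by rw [hBt]; ring
        _ ≤ A ^ (-K) * (K * s) := by
            apply mul_le_mul_of_nonneg_left _ hAK.le
            nlinarith
        _ = K * s * A ^ (-K) := by ring
        _ ≤ K * 2 ^ (K+1) * (s + s^(K+1)) * A ^ (-K) :=
            mul_le_mul_of_nonneg_right hKs hAK.le
  · rcases le_total A B with h | h
    · have : B ^ (-K) ≤ A ^ (-K) := rpow_le_rpow_of_nonpos hA0 h (by linarith)
      linarith
    · have hAB : A / B ≤ 1 + s := by
        rw [div_le_iff₀ hB0]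
        have : A - B ≤ s := by rw [abs_sub_le_iff] at hs; linarith [hs.1]
        nlinarith
      have hBA : B ^ (-K) = A ^ (-K) * (A/B) ^ K := by
        rw [div_rpow hA0.le hB0.le, rpow_neg hA0.le, rpow_neg hB0.le]
        field_simp
      have h1 : (A/B) ^ K ≤ (1+s) ^ K := rpow_le_rpow (by positivity) hAB (by linarith)
      have h2' := bern hK hs0
      calc B ^ (-K) - A ^ (-K) = A ^ (-K) * ((A/B)^K - 1) := by rw [hBA]; ring
        _ ≤ A ^ (-K) * (2^(K+1) * (s + s^(K+1))) := by
            apply mul_le_mul_of_nonneg_left _ hAK.le; linarith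
        _ = 1 * (2^(K+1) * (s + s^(K+1)) * A ^ (-K)) := by ring
        _ ≤ K * (2^(K+1) * (s + s^(K+1)) * A ^ (-K)) := by
            apply mul_le_mul_of_nonneg_right hK
            exact mul_nonneg (mul_nonneg h2.le hsum) hAK.le
        _ = K * 2 ^ (K+1) * (s + s^(K+1)) * A ^ (-K) := by ring

lemma sqrtlip (u v : ℝ) : |Real.sqrt (1 + u^2) - Real.sqrt (1 + v^2)| ≤ |u - v| := by
  set a := Real.sqrt (1 + u^2) with ha
  set b := Real.sqrt (1 + v^2) with hb
  have ha2 : a ^ 2 = 1 + u^2 := Real.sq_sqrt (by positivity)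
  have hb2 : b ^ 2 = 1 + v^2 := Real.sq_sqrt (by positivity)
  have hau : |u| ≤ a := by
    rw [ha, ← Real.sqrt_sq_eq_abs]; exact Real.sqrt_le_sqrt (by nlinarith)
  have hbv : |v| ≤ b := by
    rw [hb, ← Real.sqrt_sq_eq_abs]; exact Real.sqrt_le_sqrt (by nlinarith)
  have ha1 : 1 ≤ a := by
    have h := Real.sqrt_le_sqrt (show (1:ℝ) ≤ 1 + u^2 by nlinarith)
    rwa [Real.sqrt_one] at h
  have hb1 : 1 ≤ b := by
    have h := Real.sqrt_le_sqrt (show (1:ℝ) ≤ 1 + v^2 by nlinarith)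
    rwa [Real.sqrt_one] at h
  have hd1 : u^2 - v^2 ≤ |u - v| * (a + b) := by
    have h1 : (u-v)*(u+v) ≤ |u-v| * |u+v| :=
      le_trans (le_abs_self _) (le_of_eq (abs_mul _ _))
    have h2 : |u+v| ≤ |u| + |v| := abs_add_le u v
    nlinarith [abs_nonneg (u-v)]
  have hd2 : v^2 - u^2 ≤ |u - v| * (a + b) := by
    have h1 : (v-u)*(v+u) ≤ |v-u| * |v+u| :=
      le_trans (le_abs_self _) (le_of_eq (abs_mul _ _))
    have h2 : |v+u| ≤ |v| + |u| := abs_add_le v u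
    have h3 : |v-u| = |u-v| := abs_sub_comm v u
    nlinarith [abs_nonneg (u-v)]
  rw [abs_sub_le_iff]
  constructor <;> nlinarith [abs_nonneg (u-v)]


end AuxLemmas

/-- The polynomially decaying kernel `φ_R(x) = R^{-n} (1 + |x/R|²)^{-K/2}`. -/
noncomputable def phiR (n : ℕ) (K R : ℝ) (x : EuclideanSpace ℝ (Fin n)) : ℝ :=
  (R ^ n)⁻¹ * (1 + ‖R⁻¹ • x‖ ^ 2) ^ (-(K / 2))

section KernelHelpers
open Real
section helpers
variable {n : ℕ} {K R : ℝ}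

lemma phiR_eq (n : ℕ) (K R : ℝ) (x : EuclideanSpace ℝ (Fin n)) :
    phiR n K R x = (R ^ n)⁻¹ * (Real.sqrt (1 + ‖R⁻¹ • x‖ ^ 2)) ^ (-K) := by
  unfold phiR
  congr 1
  rw [Real.sqrt_eq_rpow, ← Real.rpow_mul (by positivity : (0:ℝ) ≤ 1 + ‖R⁻¹ • x‖ ^ 2)]
  congr 1
  ring

lemma phiR_pos (hR : 0 < R) (x : EuclideanSpace ℝ (Fin n)) : 0 < phiR n K R x := by
  unfold phiR
  exact mul_pos (inv_pos.2 (pow_pos hR n)) (rpow_pos_of_pos (by positivity) _)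

lemma continuous_phiR : Continuous (phiR n K R) := by
  unfold phiR
  refine continuous_const.mul (Continuous.rpow_const ?_ fun x => Or.inl (by positivity))
  exact continuous_const.add (by fun_prop)

lemma kernel_bound (hK : 1 ≤ K) (hR : 0 < R) (x y : EuclideanSpace ℝ (Fin n)) :
    |phiR n K R x - phiR n K R y| ≤
      (K * 2 ^ (K + 1)) * (R⁻¹ * (‖x - y‖ + R ^ (-K) * ‖x - y‖ ^ (K + 1))) * phiR n K R x := by
  set u := ‖R⁻¹ • x‖ with hu
  set v := ‖R⁻¹ • y‖ with hv
  set s := R⁻¹ * ‖x - y‖ with hsdef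
  set A := Real.sqrt (1 + u ^ 2) with hA
  set B := Real.sqrt (1 + v ^ 2) with hB
  have hA1 : 1 ≤ A := by
    have h := Real.sqrt_le_sqrt (show (1:ℝ) ≤ 1 + u ^ 2 by nlinarith [sq_nonneg u])
    rwa [Real.sqrt_one] at h
  have hB1 : 1 ≤ B := by
    have h := Real.sqrt_le_sqrt (show (1:ℝ) ≤ 1 + v ^ 2 by nlinarith [sq_nonneg v])
    rwa [Real.sqrt_one] at h
  have habs : |A - B| ≤ s := by
    refine le_trans (sqrtlip u v) ?_
    refine le_trans (abs_norm_sub_norm_le _ _) ?_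
    rw [← smul_sub, norm_smul, Real.norm_eq_abs, abs_of_pos (inv_pos.2 hR)]
  have hkey := key hK hA1 hB1 habs
  have hx : phiR n K R x = (R ^ n)⁻¹ * A ^ (-K) := phiR_eq n K R x
  have hy : phiR n K R y = (R ^ n)⁻¹ * B ^ (-K) := phiR_eq n K R y
  have hRn : (0:ℝ) < (R ^ n)⁻¹ := inv_pos.2 (pow_pos hR n)
  have hdiff : |phiR n K R x - phiR n K R y| = (R ^ n)⁻¹ * |A ^ (-K) - B ^ (-K)| := by
    rw [hx, hy, ← mul_sub, abs_mul, abs_of_pos hRn]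
  have hmain : |phiR n K R x - phiR n K R y| ≤
      (K * 2 ^ (K + 1)) * (s + s ^ (K + 1)) * phiR n K R x := by
    rw [hdiff, hx]
    calc (R ^ n)⁻¹ * |A ^ (-K) - B ^ (-K)|
        ≤ (R ^ n)⁻¹ * (K * 2 ^ (K + 1) * (s + s ^ (K + 1)) * A ^ (-K)) :=
          mul_le_mul_of_nonneg_left hkey hRn.le
      _ = K * 2 ^ (K + 1) * (s + s ^ (K + 1)) * ((R ^ n)⁻¹ * A ^ (-K)) := by ring
  have hexp : s + s ^ (K + 1) = R⁻¹ * (‖x - y‖ + R ^ (-K) * ‖x - y‖ ^ (K + 1)) := by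
    have h1 : s ^ (K + 1) = (R⁻¹) ^ (K + 1) * ‖x - y‖ ^ (K + 1) :=
      Real.mul_rpow (inv_pos.2 hR).le (norm_nonneg _)
    have h2 : (R⁻¹) ^ (K + 1) = R⁻¹ * R ^ (-K) := by
      rw [Real.inv_rpow hR.le, Real.rpow_add hR, Real.rpow_one, mul_inv,
        Real.rpow_neg hR.le]
      ring
    rw [hsdef, h1, h2]
    ring
  rw [← hexp]
  exact hmain

end helpers

end KernelHelpers

/-- The convolution `(f ∗ φ_R)(α) = ∫ f(ζ) φ_R(α − ζ) dζ`, taken in `[0, ∞]`. -/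
noncomputable def convPhi (n : ℕ) (K R : ℝ) (f : EuclideanSpace ℝ (Fin n) → ℝ)
    (α : EuclideanSpace ℝ (Fin n)) : ℝ≥0∞ :=
  ∫⁻ ζ : EuclideanSpace ℝ (Fin n), ENNReal.ofReal (f ζ * phiR n K R (α - ζ))

/-- The absolute difference `|a − b|` of two extended nonnegative reals. -/
noncomputable def eabsdiff (a b : ℝ≥0∞) : ℝ≥0∞ := (a - b) ⊔ (b - a)

section ConvHelpers
open Real
section conv
variable {n : ℕ} {K R : ℝ}

lemma conv_meas {f : EuclideanSpace ℝ (Fin n) → ℝ} (hf : Measurable f)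
    (w : EuclideanSpace ℝ (Fin n)) :
    Measurable fun ζ : EuclideanSpace ℝ (Fin n) =>
      ENNReal.ofReal (f ζ * phiR n K R (w - ζ)) := by
  apply ENNReal.measurable_ofReal.comp
  exact hf.mul (continuous_phiR.measurable.comp (measurable_const.sub measurable_id))

lemma conv_diff (hK : 1 ≤ K) (hR : 0 < R)
    {f : EuclideanSpace ℝ (Fin n) → ℝ} (hf : Measurable f) (hf0 : ∀ ζ, 0 ≤ f ζ)
    (α β : EuclideanSpace ℝ (Fin n)) :
    eabsdiff (convPhi n K R f α) (convPhi n K R f (α + β)) ≤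
      ENNReal.ofReal ((K * 2 ^ (K + 1)) * (R⁻¹ * (‖β‖ + R ^ (-K) * ‖β‖ ^ (K + 1)))) *
        convPhi n K R f α := by
  set g : ℝ := (K * 2 ^ (K + 1)) * (R⁻¹ * (‖β‖ + R ^ (-K) * ‖β‖ ^ (K + 1))) with hg
  have hg0 : 0 ≤ g := by
    have h2 : (0:ℝ) ≤ 2 ^ (K + 1) := (Real.rpow_pos_of_pos two_pos _).le
    have := Real.rpow_nonneg (norm_nonneg β) (K + 1)
    have := Real.rpow_nonneg hR.le (-K)
    positivity
  have hker : ∀ ζ : EuclideanSpace ℝ (Fin n),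
      |phiR n K R (α - ζ) - phiR n K R (α + β - ζ)| ≤ g * phiR n K R (α - ζ) := by
    intro ζ
    have h := kernel_bound hK hR (α - ζ) (α + β - ζ)
    have he : (α - ζ) - (α + β - ζ) = -β := by abel
    rwa [he, norm_neg] at h
  set h1 : EuclideanSpace ℝ (Fin n) → ℝ≥0∞ :=
    fun ζ => ENNReal.ofReal (f ζ * phiR n K R (α - ζ)) with hh1
  set h2 : EuclideanSpace ℝ (Fin n) → ℝ≥0∞ :=
    fun ζ => ENNReal.ofReal (f ζ * phiR n K R (α + β - ζ)) with hh2
  have hpt12 : ∀ ζ, h1 ζ ≤ h2 ζ + ENNReal.ofReal g * h1 ζ := by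
    intro ζ
    have hb := hker ζ
    have hreal : f ζ * phiR n K R (α - ζ) ≤
        f ζ * phiR n K R (α + β - ζ) + g * (f ζ * phiR n K R (α - ζ)) := by
      have := mul_le_mul_of_nonneg_left (abs_le.1 hb).2 (hf0 ζ)
      nlinarith [mul_le_mul_of_nonneg_left (neg_le_of_abs_le hb) (hf0 ζ)]
    calc h1 ζ ≤ ENNReal.ofReal (f ζ * phiR n K R (α + β - ζ) +
          g * (f ζ * phiR n K R (α - ζ))) := ENNReal.ofReal_le_ofReal hreal
      _ = h2 ζ + ENNReal.ofReal g * h1 ζ := by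
          rw [ENNReal.ofReal_add (mul_nonneg (hf0 ζ) (phiR_pos hR _).le)
            (mul_nonneg hg0 (mul_nonneg (hf0 ζ) (phiR_pos hR _).le)),
            ENNReal.ofReal_mul hg0]
  have hpt21 : ∀ ζ, h2 ζ ≤ h1 ζ + ENNReal.ofReal g * h1 ζ := by
    intro ζ
    have hb := hker ζ
    have hreal : f ζ * phiR n K R (α + β - ζ) ≤
        f ζ * phiR n K R (α - ζ) + g * (f ζ * phiR n K R (α - ζ)) := by
      nlinarith [mul_le_mul_of_nonneg_left (neg_le_of_abs_le hb) (hf0 ζ)]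
    calc h2 ζ ≤ ENNReal.ofReal (f ζ * phiR n K R (α - ζ) +
          g * (f ζ * phiR n K R (α - ζ))) := ENNReal.ofReal_le_ofReal hreal
      _ = h1 ζ + ENNReal.ofReal g * h1 ζ := by
          rw [ENNReal.ofReal_add (mul_nonneg (hf0 ζ) (phiR_pos hR _).le)
            (mul_nonneg hg0 (mul_nonneg (hf0 ζ) (phiR_pos hR _).le)),
            ENNReal.ofReal_mul hg0]
  have hm1 : Measurable h1 := conv_meas hf α
  have hm2 : Measurable h2 := conv_meas hf (α + β)
  have hint1 : ∫⁻ ζ, h1 ζ ≤ (∫⁻ ζ, h2 ζ) + ENNReal.ofReal g * ∫⁻ ζ, h1 ζ := by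
    calc ∫⁻ ζ, h1 ζ ≤ ∫⁻ ζ, (h2 ζ + ENNReal.ofReal g * h1 ζ) := lintegral_mono hpt12
      _ = (∫⁻ ζ, h2 ζ) + ∫⁻ ζ, ENNReal.ofReal g * h1 ζ := lintegral_add_left hm2 _
      _ = (∫⁻ ζ, h2 ζ) + ENNReal.ofReal g * ∫⁻ ζ, h1 ζ := by
          rw [lintegral_const_mul' _ _ ENNReal.ofReal_ne_top]
  have hint2 : ∫⁻ ζ, h2 ζ ≤ (∫⁻ ζ, h1 ζ) + ENNReal.ofReal g * ∫⁻ ζ, h1 ζ := by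
    calc ∫⁻ ζ, h2 ζ ≤ ∫⁻ ζ, (h1 ζ + ENNReal.ofReal g * h1 ζ) := lintegral_mono hpt21
      _ = (∫⁻ ζ, h1 ζ) + ∫⁻ ζ, ENNReal.ofReal g * h1 ζ := lintegral_add_left hm1 _
      _ = (∫⁻ ζ, h1 ζ) + ENNReal.ofReal g * ∫⁻ ζ, h1 ζ := by
          rw [lintegral_const_mul' _ _ ENNReal.ofReal_ne_top]
  have hc1 : convPhi n K R f α = ∫⁻ ζ, h1 ζ := rfl
  have hc2 : convPhi n K R f (α + β) = ∫⁻ ζ, h2 ζ := rfl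
  rw [eabsdiff, hc1, hc2]
  apply sup_le
  · rw [tsub_le_iff_right]
    calc ∫⁻ ζ, h1 ζ ≤ (∫⁻ ζ, h2 ζ) + ENNReal.ofReal g * ∫⁻ ζ, h1 ζ := hint1
      _ = ENNReal.ofReal g * (∫⁻ ζ, h1 ζ) + ∫⁻ ζ, h2 ζ := by rw [add_comm]
  · rw [tsub_le_iff_right]
    calc ∫⁻ ζ, h2 ζ ≤ (∫⁻ ζ, h1 ζ) + ENNReal.ofReal g * ∫⁻ ζ, h1 ζ := hint2
      _ = ENNReal.ofReal g * (∫⁻ ζ, h1 ζ) + ∫⁻ ζ, h1 ζ := by rw [add_comm]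

end conv

end ConvHelpers

/-- there is `C = C(n, K)` such that for every `R > 0`, every measurable
`γ : ℝ^n → [0, ∞)` with finite moments `M₁ = ∫ |β| γ(β) dβ` and
`M_{K+1} = ∫ |β|^{K+1} γ(β) dβ`, every measurable `f : ℝ^n → [0, ∞)` and every `α` with
`(f ∗ φ_R)(α) < ∞`, one has
`∫ |(f ∗ φ_R)(α) − (f ∗ φ_R)(α + β)| γ(β) dβ ≤ C R⁻¹ (M₁ + R^{-K} M_{K+1}) (f ∗ φ_R)(α)`. -/
theorem convPhi_average_displacement (n : ℕ) (hn : 1 ≤ n) (K : ℝ) (hK : 1 ≤ K) :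
    ∃ C : ℝ, ∀ R : ℝ, 0 < R →
      ∀ γ : EuclideanSpace ℝ (Fin n) → ℝ, Measurable γ → (∀ β, 0 ≤ γ β) →
      Integrable (fun β : EuclideanSpace ℝ (Fin n) => ‖β‖ * γ β) →
      Integrable (fun β : EuclideanSpace ℝ (Fin n) => ‖β‖ ^ (K + 1) * γ β) →
      ∀ f : EuclideanSpace ℝ (Fin n) → ℝ, Measurable f → (∀ ζ, 0 ≤ f ζ) →
      ∀ α : EuclideanSpace ℝ (Fin n), convPhi n K R f α < ⊤ →
        ∫⁻ β : EuclideanSpace ℝ (Fin n),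
            eabsdiff (convPhi n K R f α) (convPhi n K R f (α + β)) * ENNReal.ofReal (γ β)
          ≤ ENNReal.ofReal
              (C * R⁻¹ *
                ((∫ β : EuclideanSpace ℝ (Fin n), ‖β‖ * γ β) +
                  R ^ (-K) * ∫ β : EuclideanSpace ℝ (Fin n), ‖β‖ ^ (K + 1) * γ β)) *
            convPhi n K R f α := by
  refine ⟨K * 2 ^ (K + 1), ?_⟩
  intro R hR γ hγ hγ0 hM1 hMK f hf hf0 α hα
  set C : ℝ := K * 2 ^ (K + 1) with hC
  have hC0 : 0 ≤ C := by
    have h2 : (0:ℝ) < 2 ^ (K + 1) := Real.rpow_pos_of_pos two_pos _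
    nlinarith
  set gr : EuclideanSpace ℝ (Fin n) → ℝ :=
    fun β => C * (R⁻¹ * (‖β‖ + R ^ (-K) * ‖β‖ ^ (K + 1))) with hgr
  have hgr0 : ∀ β, 0 ≤ gr β := by
    intro β
    have := Real.rpow_nonneg (norm_nonneg β) (K + 1)
    have := Real.rpow_nonneg hR.le (-K)
    have hRi : (0:ℝ) ≤ R⁻¹ := (inv_pos.2 hR).le
    positivity
  set cA : ℝ≥0∞ := convPhi n K R f α with hcA
  -- step 1: pointwise bound then integral
  have step1 : ∫⁻ β, eabsdiff cA (convPhi n K R f (α + β)) * ENNReal.ofReal (γ β)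
      ≤ ∫⁻ β, cA * ENNReal.ofReal (gr β * γ β) := by
    apply lintegral_mono
    intro β
    have h := conv_diff hK hR hf hf0 α β
    calc eabsdiff cA (convPhi n K R f (α + β)) * ENNReal.ofReal (γ β)
        ≤ (ENNReal.ofReal (gr β) * cA) * ENNReal.ofReal (γ β) :=
          mul_le_mul_left h _
      _ = cA * ENNReal.ofReal (gr β * γ β) := by
          rw [ENNReal.ofReal_mul (hgr0 β)]; ring
  -- step 2: pull out constant
  have step2 : ∫⁻ β, cA * ENNReal.ofReal (gr β * γ β)
      = cA * ∫⁻ β, ENNReal.ofReal (gr β * γ β) :=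
    lintegral_const_mul' _ _ hα.ne
  -- step 3: integrability of gr * γ
  have hint : Integrable (fun β : EuclideanSpace ℝ (Fin n) => gr β * γ β) := by
    have he : (fun β : EuclideanSpace ℝ (Fin n) => gr β * γ β)
        = fun β => (C * R⁻¹) * (‖β‖ * γ β) + (C * R⁻¹ * R ^ (-K)) * (‖β‖ ^ (K + 1) * γ β) := by
      funext β; simp only [hgr]; ring
    rw [he]
    exact (hM1.const_mul _).add (hMK.const_mul _)
  have step3 : ∫⁻ β, ENNReal.ofReal (gr β * γ β)
      = ENNReal.ofReal (∫ β, gr β * γ β) :=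
    (ofReal_integral_eq_lintegral_ofReal hint
      (Filter.Eventually.of_forall fun β => mul_nonneg (hgr0 β) (hγ0 β))).symm
  -- step 4: compute the integral
  have step4 : ∫ β, gr β * γ β
      = C * R⁻¹ * ((∫ β : EuclideanSpace ℝ (Fin n), ‖β‖ * γ β) +
          R ^ (-K) * ∫ β : EuclideanSpace ℝ (Fin n), ‖β‖ ^ (K + 1) * γ β) := by
    have he : (fun β : EuclideanSpace ℝ (Fin n) => gr β * γ β)
        = fun β => (C * R⁻¹) * (‖β‖ * γ β) + (C * R⁻¹ * R ^ (-K)) * (‖β‖ ^ (K + 1) * γ β) := by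
      funext β; simp only [hgr]; ring
    rw [he, integral_add (hM1.const_mul _) (hMK.const_mul _),
      MeasureTheory.integral_const_mul, MeasureTheory.integral_const_mul]
    ring
  calc ∫⁻ β, eabsdiff cA (convPhi n K R f (α + β)) * ENNReal.ofReal (γ β)
      ≤ cA * ∫⁻ β, ENNReal.ofReal (gr β * γ β) := by rw [← step2]; exact step1
    _ = cA * ENNReal.ofReal (C * R⁻¹ * ((∫ β : EuclideanSpace ℝ (Fin n), ‖β‖ * γ β) +
          R ^ (-K) * ∫ β : EuclideanSpace ℝ (Fin n), ‖β‖ ^ (K + 1) * γ β)) := by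
        rw [step3, step4]
    _ = _ := mul_comm _ _
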